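/- Assume every travel-time function d_a is continuous and the charging unit price function λ_e : [0, ∞) → ℝ is continuous. Then a Wardrop Equilibrium exists, i.e., there is a feasible path-flow vector f* such that for each class s, each origin–destination pair k, and all paths r, r′ ∈ R_k with f*_{r,s} > 0, one has c_{r,s}(f*) ≤ c_{r′,s}(f*). -/

import Mathlib

open Finset MeasureTheory

/-- The data of the multiclass (EV/GV) routing game with coupled charging.
Vehicle classes are indexed by `Bool`: `true` is the electric class (e) and
`false` is the gasoline class (g). Paths are gathered in the type `R`, the
origin–destination pair of a path `r` being `od r` (so `R_k = od ⁻¹' {k}`). -/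
structure RoutingGame where
  /-- arcs -/
  A : Type
  finA : Fintype A
  /-- paths -/
  R : Type
  finR : Fintype R
  /-- origin–destination pairs -/
  K : Type
  /-- the O-D pair of each path -/
  od : R → K
  /-- each O-D pair has at least one path -/
  od_surj : Function.Surjective od
  /-- arc lengths -/
  len : A → ℝ
  len_pos : ∀ a, 0 < len a
  /-- travel demands -/
  D : K → ℝ
  D_nonneg : ∀ k, 0 ≤ D k
  /-- arc–path incidence `δ_{a,r} ∈ {0,1}` -/
  δ : A → R → ℝ
  δ_mem : ∀ a r, δ a r = 0 ∨ δ a r = 1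
  /-- class shares `X_e, X_g` -/
  X : Bool → ℝ
  X_nonneg : ∀ s, 0 ≤ X s
  /-- energy consumptions per distance unit `m_e, m_g` -/
  m : Bool → ℝ
  m_pos : ∀ s, 0 < m s
  /-- travel-time (congestion) functions `d_a` -/
  d : A → ℝ → ℝ
  /-- tolls `t_{a,s}` -/
  toll : A → Bool → ℝ
  toll_nonneg : ∀ a s, 0 ≤ toll a s
  /-- value of time `τ` -/
  τ : ℝ
  τ_pos : 0 < τ
  /-- (constant) gasoline unit price `λ_g` -/
  lamg : ℝ
  lamg_nonneg : 0 ≤ lamg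
  /-- charging unit price function `λ_e` -/
  lame : ℝ → ℝ

attribute [instance] RoutingGame.finA RoutingGame.finR

namespace RoutingGame

variable (G : RoutingGame)

/-- Arc flow of class `s`: `x_{a,s} = ∑_r δ_{a,r} f_{r,s}`. -/
noncomputable def arcFlow (f : G.R → Bool → ℝ) (a : G.A) (s : Bool) : ℝ :=
  ∑ r, G.δ a r * f r s

/-- Total arc flow `x_a = x_{a,e} + x_{a,g}`. -/
noncomputable def totFlow (f : G.R → Bool → ℝ) (a : G.A) : ℝ :=
  G.arcFlow f a true + G.arcFlow f a false

open scoped Classical in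
/-- Feasible path flows: nonnegative and meeting the demand `X_s D_k` of each
O-D pair `k` for each class `s`. -/
def Feasible (f : G.R → Bool → ℝ) : Prop :=
  (∀ r s, 0 ≤ f r s) ∧
  ∀ (k : G.K) (s : Bool), (∑ r, if G.od r = k then f r s else 0) = G.X s * G.D k

/-- Aggregate energy need of class `s`: `L_s = m_s ∑_a x_{a,s} l_a`. -/
noncomputable def Lneed (f : G.R → Bool → ℝ) (s : Bool) : ℝ :=
  G.m s * ∑ a, G.arcFlow f a s * G.len a

/-- Unit energy price of class `s` at flow `f`: `λ_e(L_e(f))` for EV, `λ_g` for GV. -/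
noncomputable def price (f : G.R → Bool → ℝ) (s : Bool) : ℝ :=
  if s then G.lame (G.Lneed f true) else G.lamg

/-- Cost of path `r` for class `s` at flow `f`:
`c_{r,s}(f) = ∑_a δ_{a,r} (τ d_a(x_a) + t_{a,s} + l_a m_s λ_s)`. -/
noncomputable def cost (f : G.R → Bool → ℝ) (r : G.R) (s : Bool) : ℝ :=
  ∑ a, G.δ a r * (G.τ * G.d a (G.totFlow f a) + G.toll a s + G.len a * G.m s * G.price f s)

/-- Wardrop Equilibrium: feasible, and for each class any used path is not more
costly than any other path with the same O-D pair. -/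
def IsWE (f : G.R → Bool → ℝ) : Prop :=
  G.Feasible f ∧ ∀ (s : Bool) (r r' : G.R), G.od r = G.od r' → 0 < f r s →
    G.cost f r s ≤ G.cost f r' s

/-- The Beckmann function
`B(f) = τ ∑_a ∫_0^{x_a} d_a + ∑_{a,s} t_{a,s} x_{a,s} + ∫_0^{L_e(f)} λ_e + λ_g L_g(f)`. -/
noncomputable def Beckmann (f : G.R → Bool → ℝ) : ℝ :=
  G.τ * ∑ a, (∫ u in (0 : ℝ)..G.totFlow f a, G.d a u)
    + ∑ a, ∑ s : Bool, G.toll a s * G.arcFlow f a s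
    + (∫ u in (0 : ℝ)..G.Lneed f true, G.lame u)
    + G.lamg * G.Lneed f false

open scoped Classical in
/-- Perturbation moving `ε` units of class-`s` flow from path `r` to path `r'`. -/
noncomputable def pert (f : G.R → Bool → ℝ) (r r' : G.R) (s : Bool) (ε : ℝ) :
    G.R → Bool → ℝ := fun p t =>
  f p t + ε * (if t = s then (if p = r' then (1:ℝ) else 0) - (if p = r then 1 else 0) else 0)

end RoutingGame


namespace RoutingGame

variable (G : RoutingGame)

/-- Travel time extended continuously to all of `ℝ`. -/
noncomputable def dext (a : G.A) (x : ℝ) : ℝ := G.d a (max x 0)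

/-- Charging price extended continuously to all of `ℝ`. -/
noncomputable def lamext (x : ℝ) : ℝ := G.lame (max x 0)

lemma continuous_dext (hd : ∀ a, ContinuousOn (G.d a) (Set.Ici 0)) (a : G.A) :
    Continuous (G.dext a) :=
  (hd a).comp_continuous (continuous_id.max continuous_const) fun x => le_max_right x 0

lemma continuous_lamext (hlame : ContinuousOn G.lame (Set.Ici 0)) :
    Continuous G.lamext :=
  hlame.comp_continuous (continuous_id.max continuous_const) fun x => le_max_right x 0

/-- Smoothed Beckmann potential. -/
noncomputable def B' (f : G.R → Bool → ℝ) : ℝ :=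
  G.τ * ∑ a, (∫ u in (0 : ℝ)..G.totFlow f a, G.dext a u)
    + ∑ a, ∑ s : Bool, G.toll a s * G.arcFlow f a s
    + (∫ u in (0 : ℝ)..G.Lneed f true, G.lamext u)
    + G.lamg * G.Lneed f false

lemma primitive_hasDerivAt {φ : ℝ → ℝ} (h : Continuous φ) (x : ℝ) :
    HasDerivAt (fun y => ∫ u in (0:ℝ)..y, φ u) (φ x) x :=
  (h.integral_hasStrictDerivAt 0 x).hasDerivAt

lemma primitive_continuous {φ : ℝ → ℝ} (h : Continuous φ) :
    Continuous (fun y => ∫ u in (0:ℝ)..y, φ u) :=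
  continuous_iff_continuousAt.2 fun x => (primitive_hasDerivAt h x).continuousAt

lemma continuous_arcFlow (a : G.A) (s : Bool) :
    Continuous (fun f : G.R → Bool → ℝ => G.arcFlow f a s) :=
  continuous_finset_sum _ fun r _ =>
    continuous_const.mul ((continuous_apply s).comp (continuous_apply r))

lemma continuous_totFlow (a : G.A) :
    Continuous (fun f : G.R → Bool → ℝ => G.totFlow f a) :=
  (G.continuous_arcFlow a true).add (G.continuous_arcFlow a false)

lemma continuous_Lneed (s : Bool) :
    Continuous (fun f : G.R → Bool → ℝ => G.Lneed f s) :=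
  continuous_const.mul <| continuous_finset_sum _ fun a _ =>
    (G.continuous_arcFlow a s).mul continuous_const

lemma continuous_B' (hd : ∀ a, ContinuousOn (G.d a) (Set.Ici 0))
    (hlame : ContinuousOn G.lame (Set.Ici 0)) : Continuous G.B' := by
  unfold B'
  refine (((continuous_const.mul ?_).add ?_).add ?_).add (continuous_const.mul (G.continuous_Lneed false))
  · exact continuous_finset_sum _ fun a _ =>
      (primitive_continuous (G.continuous_dext hd a)).comp (G.continuous_totFlow a)
  · exact continuous_finset_sum _ fun a _ => continuous_finset_sum _ fun s _ =>
      continuous_const.mul (G.continuous_arcFlow a s)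
  · exact (primitive_continuous (G.continuous_lamext hlame)).comp (G.continuous_Lneed true)

lemma arcFlow_nonneg {f : G.R → Bool → ℝ} (hf : G.Feasible f) (a : G.A) (s : Bool) :
    0 ≤ G.arcFlow f a s :=
  Finset.sum_nonneg fun r _ =>
    mul_nonneg (by rcases G.δ_mem a r with h | h <;> simp [h]) (hf.1 r s)

lemma totFlow_nonneg {f : G.R → Bool → ℝ} (hf : G.Feasible f) (a : G.A) :
    0 ≤ G.totFlow f a :=
  add_nonneg (G.arcFlow_nonneg hf a true) (G.arcFlow_nonneg hf a false)

lemma Lneed_nonneg {f : G.R → Bool → ℝ} (hf : G.Feasible f) (s : Bool) :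
    0 ≤ G.Lneed f s :=
  mul_nonneg (G.m_pos s).le <| Finset.sum_nonneg fun a _ =>
    mul_nonneg (G.arcFlow_nonneg hf a s) (G.len_pos a).le

lemma feasible_nonempty : ∃ f, G.Feasible f := by
  classical
  choose σ hσ using G.od_surj
  refine ⟨fun r s => if r = σ (G.od r) then G.X s * G.D (G.od r) else 0, fun r s => ?_, fun k s => ?_⟩
  · dsimp only
    split_ifs
    · exact mul_nonneg (G.X_nonneg s) (G.D_nonneg _)
    · exact le_refl 0
  · rw [Finset.sum_eq_single (σ k)]
    · simp [hσ k]
    · intro b _ hb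
      by_cases h : G.od b = k
      · simp [h, hb]
      · simp [h]
    · intro h; exact absurd (Finset.mem_univ _) h

lemma feasible_le {f : G.R → Bool → ℝ} (hf : G.Feasible f) (r : G.R) (s : Bool) :
    f r s ≤ G.X s * G.D (G.od r) := by
  classical
  rw [← hf.2 (G.od r) s]
  have := Finset.single_le_sum (f := fun p => if G.od p = G.od r then f p s else 0)
    (fun p _ => by split_ifs; exacts [hf.1 p s, le_refl 0]) (Finset.mem_univ r)
  simpa using this

lemma isClosed_feasible : IsClosed {f : G.R → Bool → ℝ | G.Feasible f} := by
  classical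
  have : {f : G.R → Bool → ℝ | G.Feasible f} =
      (⋂ (r : G.R), ⋂ (s : Bool), {f : G.R → Bool → ℝ | 0 ≤ f r s}) ∩
      ⋂ (k : G.K), ⋂ (s : Bool),
        {f : G.R → Bool → ℝ | (∑ r, if G.od r = k then f r s else 0) = G.X s * G.D k} := by
    ext f
    simp only [Set.mem_setOf_eq, Set.mem_inter_iff, Set.mem_iInter, Feasible]
  rw [this]
  refine IsClosed.inter ?_ ?_
  · exact isClosed_iInter fun r => isClosed_iInter fun s =>
      isClosed_le continuous_const ((continuous_apply s).comp (continuous_apply r))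
  · refine isClosed_iInter fun k => isClosed_iInter fun s => isClosed_eq ?_ continuous_const
    refine continuous_finset_sum _ fun r _ => ?_
    by_cases h : G.od r = k
    · simpa [h, Function.comp_def] using (continuous_apply s).comp (continuous_apply (A := fun _ : G.R => Bool → ℝ) r)
    · simp [h]
      exact continuous_const

lemma isCompact_feasible : IsCompact {f : G.R → Bool → ℝ | G.Feasible f} := by
  refine IsCompact.of_isClosed_subset
    (isCompact_univ_pi fun r => isCompact_univ_pi fun s => isCompact_Icc
      (a := (0:ℝ)) (b := G.X s * G.D (G.od r))) G.isClosed_feasible ?_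
  intro f hf
  rw [Set.mem_univ_pi]
  intro r
  rw [Set.mem_univ_pi]
  intro s
  exact ⟨hf.1 r s, G.feasible_le hf r s⟩

end RoutingGame

/-- Prop. 4, existence: if the travel-time functions and the charging
unit price are continuous, a Wardrop Equilibrium exists. -/
theorem exists_WE (G : RoutingGame)
    (hd : ∀ a, ContinuousOn (G.d a) (Set.Ici 0))
    (hlame : ContinuousOn G.lame (Set.Ici 0)) :
    ∃ f : G.R → Bool → ℝ, G.IsWE f := by
  classical
  obtain ⟨f0, hf0⟩ := G.feasible_nonempty
  obtain ⟨f, hfS, hmin⟩ := G.isCompact_feasible.exists_isMinOn ⟨f0, hf0⟩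
    (G.continuous_B' hd hlame).continuousOn
  refine ⟨f, hfS, ?_⟩
  intro s r r' hod hfr
  by_cases hrr : r = r'
  · subst hrr; exact le_rfl
  have hrr' : ¬ r' = r := fun h => hrr h.symm
  set g : ℝ → G.R → Bool → ℝ := G.pert f r r' s with hg_def
  have hgval : ∀ (ε : ℝ) (p : G.R) (t : Bool), g ε p t
      = f p t + ε * (if t = s then (if p = r' then (1:ℝ) else 0) - (if p = r then 1 else 0) else 0) := by
    intro ε p t; rw [hg_def]; rfl
  have hg0 : g 0 = f := by funext p t; rw [hgval]; ring
  -- arc flows along the perturbation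
  have harc : ∀ (ε : ℝ) (a : G.A) (t : Bool), G.arcFlow (g ε) a t
      = G.arcFlow f a t + ε * (if t = s then G.δ a r' - G.δ a r else 0) := by
    intro ε a t
    by_cases ht : t = s
    · subst t
      have hpt : ∀ p : G.R, G.δ a p * g ε p s
          = G.δ a p * f p s + ε * (if p = r' then G.δ a p else 0)
            - ε * (if p = r then G.δ a p else 0) := by
        intro p
        rw [hgval]
        simp only [eq_self_iff_true, if_true]
        by_cases h1 : p = r' <;> by_cases h2 : p = r
        · exact absurd (h1.symm.trans h2) hrr'
        · rw [if_pos h1, if_neg h2, if_pos h1, if_neg h2]; ring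
        · rw [if_neg h1, if_pos h2, if_neg h1, if_pos h2]; ring
        · rw [if_neg h1, if_neg h2, if_neg h1, if_neg h2]; ring
      unfold RoutingGame.arcFlow
      rw [Finset.sum_congr rfl fun p _ => hpt p, Finset.sum_sub_distrib,
        Finset.sum_add_distrib, ← Finset.mul_sum, ← Finset.mul_sum,
        Finset.sum_ite_eq', Finset.sum_ite_eq']
      simp only [Finset.mem_univ, if_true, eq_self_iff_true]
      ring
    · have hpt : ∀ p : G.R, G.δ a p * g ε p t = G.δ a p * f p t := by
        intro p; rw [hgval, if_neg ht]; ring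
      unfold RoutingGame.arcFlow
      rw [Finset.sum_congr rfl fun p _ => hpt p, if_neg ht]
      ring
  have htot : ∀ (ε : ℝ) (a : G.A), G.totFlow (g ε) a
      = G.totFlow f a + ε * (G.δ a r' - G.δ a r) := by
    intro ε a
    simp only [RoutingGame.totFlow, harc]
    cases s <;> simp <;> ring
  have hLneed : ∀ (ε : ℝ) (t : Bool), G.Lneed (g ε) t
      = G.Lneed f t + ε * (if t = s then G.m t * ∑ a, (G.δ a r' - G.δ a r) * G.len a else 0) := by
    intro ε t
    have hexp : ∀ a : G.A, (G.arcFlow f a t + ε * (if t = s then G.δ a r' - G.δ a r else 0)) * G.len a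
        = G.arcFlow f a t * G.len a
          + ε * (if t = s then (G.δ a r' - G.δ a r) * G.len a else 0) := by
      intro a; by_cases ht : t = s
      · rw [if_pos ht, if_pos ht]; ring
      · rw [if_neg ht, if_neg ht]; ring
    by_cases ht : t = s
    · subst t
      have hbody : ∀ a : G.A, G.arcFlow (g ε) a s * G.len a
          = G.arcFlow f a s * G.len a + ε * ((G.δ a r' - G.δ a r) * G.len a) := by
        intro a; rw [harc]; simp only [eq_self_iff_true, if_true]; ring
      unfold RoutingGame.Lneed
      rw [Finset.sum_congr rfl fun a _ => hbody a, Finset.sum_add_distrib, ← Finset.mul_sum,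
        mul_add]
      simp only [eq_self_iff_true, if_true]
      ring
    · simp only [RoutingGame.Lneed, harc, hexp, if_neg ht, Finset.sum_add_distrib,
        ← Finset.mul_sum, mul_add, mul_zero, Finset.sum_const_zero, add_zero]
  -- feasibility of the perturbed flows
  have hfeas : ∀ ε : ℝ, 0 ≤ ε → ε ≤ f r s → G.Feasible (g ε) := by
    intro ε hε0 hε1
    constructor
    · intro p t
      have hnn := hfS.1 p t
      rw [hgval]
      by_cases ht : t = s
      · subst t
        simp only [eq_self_iff_true, if_true]
        by_cases h2 : p = r
        · have h1 : ¬ p = r' := by rw [h2]; exact hrr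
          rw [if_neg h1, if_pos h2]
          have hle : ε ≤ f p s := by rw [h2]; exact hε1
          nlinarith [hle]
        · by_cases h1 : p = r'
          · rw [if_pos h1, if_neg h2]
            nlinarith [hnn, hε0]
          · rw [if_neg h1, if_neg h2]
            nlinarith [hnn]
      · rw [if_neg ht, mul_zero, add_zero]
        exact hnn
    · intro k t
      have hpt2 : ∀ p : G.R, (if G.od p = k then g ε p t else 0)
          = (if G.od p = k then f p t else 0)
            + ε * ((if t = s then (if p = r' then (if G.od p = k then (1:ℝ) else 0) else 0)
                - (if p = r then (if G.od p = k then (1:ℝ) else 0) else 0) else 0)) := by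
        intro p
        rw [hgval]
        by_cases h : G.od p = k
        · rw [if_pos h, if_pos h]
          by_cases ht : t = s
          · rw [if_pos ht, if_pos ht]
            by_cases h1 : p = r' <;> by_cases h2 : p = r
            · exact absurd (h1.symm.trans h2) hrr'
            · rw [if_pos h1, if_neg h2, if_pos h1, if_neg h2, if_pos h]
            · rw [if_neg h1, if_pos h2, if_neg h1, if_pos h2, if_pos h]
            · rw [if_neg h1, if_neg h2, if_neg h1, if_neg h2]
          · rw [if_neg ht, if_neg ht]
        · rw [if_neg h, if_neg h]
          by_cases ht : t = s
          · rw [if_pos ht]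
            by_cases h1 : p = r' <;> by_cases h2 : p = r
            · exact absurd (h1.symm.trans h2) hrr'
            · rw [if_pos h1, if_neg h2, if_neg h]; ring
            · rw [if_neg h1, if_pos h2, if_neg h]; ring
            · rw [if_neg h1, if_neg h2]; ring
          · rw [if_neg ht]; ring
      rw [Finset.sum_congr rfl fun p _ => hpt2 p, Finset.sum_add_distrib, ← Finset.mul_sum]
      by_cases ht : t = s
      · subst t
        simp only [eq_self_iff_true, if_true]
        rw [Finset.sum_sub_distrib, Finset.sum_ite_eq', Finset.sum_ite_eq']
        simp only [Finset.mem_univ, if_true, hod, sub_self, mul_zero, add_zero]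
        exact hfS.2 k s
      · simp only [if_neg ht, Finset.sum_const_zero, mul_zero, add_zero]
        exact hfS.2 k t
  -- the one-sided derivative of the Beckmann potential
  have hint : ∀ (c y : ℝ) (ψ : ℝ → ℝ), Continuous ψ →
      HasDerivAt (fun ε : ℝ => ∫ u in (0:ℝ)..(y + ε * c), ψ u) (ψ y * c) 0 := by
    intro c y ψ hψ
    have h1 : HasDerivAt (fun ε : ℝ => y + ε * c) c 0 := by
      simpa using ((hasDerivAt_id (0:ℝ)).mul_const c).const_add y
    have h2 := (hψ.integral_hasStrictDerivAt 0 (y + 0 * c)).hasDerivAt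
    have h3 := h2.comp 0 h1
    simpa [Function.comp_def] using h3
  have hC : HasDerivAt (fun ε => G.B' (g ε))
      (G.τ * ∑ a, G.dext a (G.totFlow f a) * (G.δ a r' - G.δ a r)
        + ∑ a, ∑ t : Bool, G.toll a t * (if t = s then G.δ a r' - G.δ a r else 0)
        + G.lamext (G.Lneed f true)
            * (if true = s then G.m true * ∑ a, (G.δ a r' - G.δ a r) * G.len a else 0)
        + G.lamg * (if false = s then G.m false * ∑ a, (G.δ a r' - G.δ a r) * G.len a else 0)) 0 := by
    simp only [RoutingGame.B', htot, harc, hLneed]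
    refine HasDerivAt.add (HasDerivAt.add (HasDerivAt.add ?_ ?_) ?_) ?_
    · exact HasDerivAt.const_mul G.τ
        (HasDerivAt.fun_sum fun a _ => hint (G.δ a r' - G.δ a r) (G.totFlow f a) _ (G.continuous_dext hd a))
    · refine HasDerivAt.fun_sum fun a _ => HasDerivAt.fun_sum fun t _ => ?_
      simpa using (((hasDerivAt_id (0:ℝ)).mul_const
        (if t = s then G.δ a r' - G.δ a r else 0)).const_add (G.arcFlow f a t)).const_mul (G.toll a t)
    · exact hint _ (G.Lneed f true) _ (G.continuous_lamext hlame)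
    · simpa using (((hasDerivAt_id (0:ℝ)).mul_const
        (if false = s then G.m false * ∑ a, (G.δ a r' - G.δ a r) * G.len a else 0)).const_add
        (G.Lneed f false)).const_mul G.lamg
  -- the derivative is nonnegative since f is a minimizer
  have htend : Filter.Tendsto (slope (fun ε => G.B' (g ε)) 0) (nhdsWithin 0 (Set.Ioi 0))
      (nhds (G.τ * ∑ a, G.dext a (G.totFlow f a) * (G.δ a r' - G.δ a r)
        + ∑ a, ∑ t : Bool, G.toll a t * (if t = s then G.δ a r' - G.δ a r else 0)
        + G.lamext (G.Lneed f true)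
            * (if true = s then G.m true * ∑ a, (G.δ a r' - G.δ a r) * G.len a else 0)
        + G.lamg * (if false = s then G.m false * ∑ a, (G.δ a r' - G.δ a r) * G.len a else 0))) :=
    (hasDerivAt_iff_tendsto_slope.1 hC).mono_left
      (nhdsWithin_mono _ fun x hx => Set.mem_compl_singleton_iff.2 (ne_of_gt hx))
  have hev : ∀ᶠ ε in nhdsWithin (0:ℝ) (Set.Ioi 0),
      0 ≤ slope (fun ε => G.B' (g ε)) 0 ε := by
    filter_upwards [Ioc_mem_nhdsGT_of_mem ⟨le_refl (0:ℝ), hfr⟩] with ε hε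
    rw [slope_def_field]
    apply div_nonneg
    · rw [hg0]
      exact sub_nonneg.2 ((isMinOn_iff.1 hmin) _ (hfeas ε hε.1.le hε.2))
    · simpa using hε.1.le
  have hC0 : 0 ≤ G.τ * ∑ a, G.dext a (G.totFlow f a) * (G.δ a r' - G.δ a r)
        + ∑ a, ∑ t : Bool, G.toll a t * (if t = s then G.δ a r' - G.δ a r else 0)
        + G.lamext (G.Lneed f true)
            * (if true = s then G.m true * ∑ a, (G.δ a r' - G.δ a r) * G.len a else 0)
        + G.lamg * (if false = s then G.m false * ∑ a, (G.δ a r' - G.δ a r) * G.len a else 0) :=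
    ge_of_tendsto htend hev
  -- identify the derivative with the cost difference
  have hdx : ∀ a : G.A, G.dext a (G.totFlow f a) = G.d a (G.totFlow f a) := by
    intro a; rw [RoutingGame.dext, max_eq_left (G.totFlow_nonneg hfS a)]
  have hlx : G.lamext (G.Lneed f true) = G.lame (G.Lneed f true) := by
    rw [RoutingGame.lamext, max_eq_left (G.Lneed_nonneg hfS true)]
  rw [← sub_nonneg]
  refine le_trans hC0 (le_of_eq ?_)
  simp only [hdx, hlx, RoutingGame.cost, RoutingGame.price]
  rw [← Finset.sum_sub_distrib]
  cases s
  · simp only [Fintype.sum_bool, show ((true:Bool) = false) = False by simp,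
      show ((false:Bool) = false) = True by simp, show ((false:Bool) = true) = False by simp,
      if_true, if_false,
      mul_zero, add_zero, zero_add, mul_one]
    simp only [Finset.mul_sum]
    rw [← Finset.sum_add_distrib, ← Finset.sum_add_distrib]
    refine Finset.sum_congr rfl fun a _ => by ring
  · simp only [Fintype.sum_bool, show ((true:Bool) = true) = True by simp,
      show ((false:Bool) = true) = False by simp, if_true, if_false,
      mul_zero, add_zero, zero_add, mul_one]
    simp only [Finset.mul_sum]
    rw [← Finset.sum_add_distrib, ← Finset.sum_add_distrib]
    refine Finset.sum_congr rfl fun a _ => by ring
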